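/- Let 𝒴 ⊂ ℝ be a finite set, let 𝒜, 𝒢₁, 𝒢₂, ℬ₂ be finite types, let p be a strictly positive probability mass function on 𝒴 × 𝒜 × 𝒢₁ × 𝒢₂ × ℬ₂, and fix a ∈ 𝒜. If G₂ ⊥ (A, G₁) | B₂ under p, then for all (y, a′, g₁, g₂, b₂): ψ_a^{G₁,B₂}(y,a′,g₁,b₂) − ψ_a^{G₁,(G₂,B₂)}(y,a′,g₁,g₂,b₂) = 1{a′=a} · ( p(g₁)·p(b₂) / p(a,g₁,b₂) ) · ( m₂(g₁,g₂,b₂) − m₁(g₁,b₂) ) + ∑_{g₁′} p(g₁′) · ( m₁(g₁′,b₂) − m₂(g₁′,g₂,b₂) ), where m₁(g₁,b₂) := ∑_y y·p(y | a,g₁,b₂) and m₂(g₁,g₂,b₂) := ∑_y y·p(y | a,g₁,g₂,b₂). -/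

import Mathlib

open Finset

noncomputable section

variable {Y : Finset ℝ} {A G₁ G₂ B₂ : Type}
variable [Fintype A] [Fintype G₁] [Fintype G₂] [Fintype B₂] [DecidableEq A]

/-- Marginal `p(g₁)`. -/
def pG1 (p : Y × A × G₁ × G₂ × B₂ → ℝ) (g₁ : G₁) : ℝ :=
  ∑ y : Y, ∑ a : A, ∑ g₂ : G₂, ∑ b₂ : B₂, p (y, a, g₁, g₂, b₂)

/-- Marginal `p(g₂)`. -/
def pG2 (p : Y × A × G₁ × G₂ × B₂ → ℝ) (g₂ : G₂) : ℝ :=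
  ∑ y : Y, ∑ a : A, ∑ g₁ : G₁, ∑ b₂ : B₂, p (y, a, g₁, g₂, b₂)

/-- Marginal `p(b₂)`. -/
def pB2 (p : Y × A × G₁ × G₂ × B₂ → ℝ) (b₂ : B₂) : ℝ :=
  ∑ y : Y, ∑ a : A, ∑ g₁ : G₁, ∑ g₂ : G₂, p (y, a, g₁, g₂, b₂)

/-- Marginal `p(g₂, b₂)`. -/
def pG2B2 (p : Y × A × G₁ × G₂ × B₂ → ℝ) (g₂ : G₂) (b₂ : B₂) : ℝ :=
  ∑ y : Y, ∑ a : A, ∑ g₁ : G₁, p (y, a, g₁, g₂, b₂)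

/-- Marginal `p(a, g₁, b₂)`. -/
def pAG1B2 (p : Y × A × G₁ × G₂ × B₂ → ℝ) (a : A) (g₁ : G₁) (b₂ : B₂) : ℝ :=
  ∑ y : Y, ∑ g₂ : G₂, p (y, a, g₁, g₂, b₂)

/-- Marginal `p(a, g₁, g₂, b₂)`. -/
def pAG1G2B2 (p : Y × A × G₁ × G₂ × B₂ → ℝ) (a : A) (g₁ : G₁) (g₂ : G₂) (b₂ : B₂) : ℝ :=
  ∑ y : Y, p (y, a, g₁, g₂, b₂)

/-- Marginal `p(a, g₁, g₂)`. -/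
def pAG1G2 (p : Y × A × G₁ × G₂ × B₂ → ℝ) (a : A) (g₁ : G₁) (g₂ : G₂) : ℝ :=
  ∑ y : Y, ∑ b₂ : B₂, p (y, a, g₁, g₂, b₂)

/-- Outcome regression `m₁(g₁,b₂) = ∑_y y·p(y | a, g₁, b₂)` for the
adjustment set `(G₁, B₂)`. -/
def m1 (p : Y × A × G₁ × G₂ × B₂ → ℝ) (a : A) (g₁ : G₁) (b₂ : B₂) : ℝ :=
  ∑ y : Y, (y : ℝ) * ((∑ g₂ : G₂, p (y, a, g₁, g₂, b₂)) / pAG1B2 p a g₁ b₂)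

/-- Outcome regression `m₂(g₁,g₂,b₂) = ∑_y y·p(y | a, g₁, g₂, b₂)` for the
adjustment set `(G₁, (G₂, B₂))`. -/
def m2 (p : Y × A × G₁ × G₂ × B₂ → ℝ) (a : A) (g₁ : G₁) (g₂ : G₂) (b₂ : B₂) : ℝ :=
  ∑ y : Y, (y : ℝ) * (p (y, a, g₁, g₂, b₂) / pAG1G2B2 p a g₁ g₂ b₂)

/-- Outcome regression `m₃(g₁,g₂) = ∑_y y·p(y | a, g₁, g₂)` for the
adjustment set `(G₁, G₂)`. -/
def m3 (p : Y × A × G₁ × G₂ × B₂ → ℝ) (a : A) (g₁ : G₁) (g₂ : G₂) : ℝ :=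
  ∑ y : Y, (y : ℝ) * ((∑ b₂ : B₂, p (y, a, g₁, g₂, b₂)) / pAG1G2 p a g₁ g₂)

/-- Target parameter for the adjustment set `(G₁, B₂)`. -/
def T1 (p : Y × A × G₁ × G₂ × B₂ → ℝ) (a : A) : ℝ :=
  ∑ g₁ : G₁, pG1 p g₁ * ∑ b₂ : B₂, pB2 p b₂ * m1 p a g₁ b₂

/-- Target parameter for the adjustment set `(G₁, (G₂, B₂))`. -/
def T2 (p : Y × A × G₁ × G₂ × B₂ → ℝ) (a : A) : ℝ :=
  ∑ g₁ : G₁, pG1 p g₁ * ∑ g₂ : G₂, ∑ b₂ : B₂, pG2B2 p g₂ b₂ * m2 p a g₁ g₂ b₂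

/-- Target parameter for the adjustment set `(G₁, G₂)`. -/
def T3 (p : Y × A × G₁ × G₂ × B₂ → ℝ) (a : A) : ℝ :=
  ∑ g₁ : G₁, pG1 p g₁ * ∑ g₂ : G₂, pG2 p g₂ * m3 p a g₁ g₂

/-- Influence function `ψ_a^{G₁,B₂}` for the adjustment set `(G₁, B₂)`. -/
def psi1 (p : Y × A × G₁ × G₂ × B₂ → ℝ) (a : A)
    (y : Y) (a' : A) (g₁ : G₁) (b₂ : B₂) : ℝ :=
  (if a' = a then (1 : ℝ) else 0) * (pG1 p g₁ * pB2 p b₂ / pAG1B2 p a g₁ b₂) *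
      ((y : ℝ) - m1 p a g₁ b₂)
    + (∑ b₂' : B₂, pB2 p b₂' * m1 p a g₁ b₂')
    + (∑ g₁' : G₁, pG1 p g₁' * m1 p a g₁' b₂)
    - 2 * T1 p a

/-- Influence function `ψ_a^{G₁,(G₂,B₂)}` for the adjustment set `(G₁, (G₂, B₂))`. -/
def psi2 (p : Y × A × G₁ × G₂ × B₂ → ℝ) (a : A)
    (y : Y) (a' : A) (g₁ : G₁) (g₂ : G₂) (b₂ : B₂) : ℝ :=
  (if a' = a then (1 : ℝ) else 0) *
      (pG1 p g₁ * pG2B2 p g₂ b₂ / pAG1G2B2 p a g₁ g₂ b₂) *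
      ((y : ℝ) - m2 p a g₁ g₂ b₂)
    + (∑ g₂' : G₂, ∑ b₂' : B₂, pG2B2 p g₂' b₂' * m2 p a g₁ g₂' b₂')
    + (∑ g₁' : G₁, pG1 p g₁' * m2 p a g₁' g₂ b₂)
    - 2 * T2 p a

/-- Influence function `ψ_a^{G₁,G₂}` for the adjustment set `(G₁, G₂)`. -/
def psi3 (p : Y × A × G₁ × G₂ × B₂ → ℝ) (a : A)
    (y : Y) (a' : A) (g₁ : G₁) (g₂ : G₂) : ℝ :=
  (if a' = a then (1 : ℝ) else 0) * (pG1 p g₁ * pG2 p g₂ / pAG1G2 p a g₁ g₂) *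
      ((y : ℝ) - m3 p a g₁ g₂)
    + (∑ g₂' : G₂, pG2 p g₂' * m3 p a g₁ g₂')
    + (∑ g₁' : G₁, pG1 p g₁' * m3 p a g₁' g₂)
    - 2 * T3 p a

/-- Conditional independence `G₂ ⊥ (A, G₁) | B₂` under `p`. -/
def CI_G2_AG1_B2 (p : Y × A × G₁ × G₂ × B₂ → ℝ) : Prop :=
  ∀ (g₂ : G₂) (a : A) (g₁ : G₁) (b₂ : B₂),
    (∑ y : Y, p (y, a, g₁, g₂, b₂)) / pB2 p b₂ =
      (pG2B2 p g₂ b₂ / pB2 p b₂) * (pAG1B2 p a g₁ b₂ / pB2 p b₂)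

/-- Conditional independence `Y ⊥ B₂ | (A, G₁, G₂)` under `p`. -/
def CI_Y_B2_AG1G2 (p : Y × A × G₁ × G₂ × B₂ → ℝ) : Prop :=
  ∀ (y : Y) (a : A) (g₁ : G₁) (g₂ : G₂) (b₂ : B₂),
    p (y, a, g₁, g₂, b₂) / pAG1G2 p a g₁ g₂ =
      ((∑ b₂' : B₂, p (y, a, g₁, g₂, b₂')) / pAG1G2 p a g₁ g₂) *
        (pAG1G2B2 p a g₁ g₂ b₂ / pAG1G2 p a g₁ g₂)

/-- Variance of a real function of the observation under `p`. -/
def VarP (p : Y × A × G₁ × G₂ × B₂ → ℝ) (f : Y × A × G₁ × G₂ × B₂ → ℝ) : ℝ :=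
  (∑ o : Y × A × G₁ × G₂ × B₂, p o * f o ^ 2) -
    (∑ o : Y × A × G₁ × G₂ × B₂, p o * f o) ^ 2

/-- Simplified formula for the difference of the two influence functions
in the proof of Lemma 4.1, under `G₂ ⊥ (A, G₁) | B₂`. -/
theorem psi_difference_formula
    (p : Y × A × G₁ × G₂ × B₂ → ℝ)
    (hpos : ∀ o, 0 < p o) (hsum : ∑ o, p o = 1) (a : A)
    (hCI : CI_G2_AG1_B2 p) :
    ∀ (y : Y) (a' : A) (g₁ : G₁) (g₂ : G₂) (b₂ : B₂),
      psi1 p a y a' g₁ b₂ - psi2 p a y a' g₁ g₂ b₂ =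
        (if a' = a then (1 : ℝ) else 0) *
            (pG1 p g₁ * pB2 p b₂ / pAG1B2 p a g₁ b₂) *
            (m2 p a g₁ g₂ b₂ - m1 p a g₁ b₂)
          + ∑ g₁' : G₁, pG1 p g₁' * (m1 p a g₁' b₂ - m2 p a g₁' g₂ b₂) := by
  -- nonemptiness of all component types
  have hne : Nonempty (Y × A × G₁ × G₂ × B₂) := by
    by_contra h
    rw [not_nonempty_iff] at h
    rw [Finset.univ_eq_empty, Finset.sum_empty] at hsum
    exact one_ne_zero hsum.symm
  obtain ⟨⟨y0, a0, g10, g20, b20⟩⟩ := hne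
  have hYne : Nonempty Y := ⟨y0⟩
  have hAne : Nonempty A := ⟨a0⟩
  have hG1ne : Nonempty G₁ := ⟨g10⟩
  have hG2ne : Nonempty G₂ := ⟨g20⟩
  have hB2ne : Nonempty B₂ := ⟨b20⟩
  -- positivity of marginals
  have hpB2 : ∀ b₂, 0 < pB2 p b₂ := fun b₂ =>
    Finset.sum_pos (fun _ _ => Finset.sum_pos (fun _ _ => Finset.sum_pos
      (fun _ _ => Finset.sum_pos (fun _ _ => hpos _) univ_nonempty)
      univ_nonempty) univ_nonempty) univ_nonempty
  have hpG2B2 : ∀ g₂ b₂, 0 < pG2B2 p g₂ b₂ := fun g₂ b₂ =>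
    Finset.sum_pos (fun _ _ => Finset.sum_pos (fun _ _ => Finset.sum_pos
      (fun _ _ => hpos _) univ_nonempty) univ_nonempty) univ_nonempty
  have hpAG1B2 : ∀ a' g₁ b₂, 0 < pAG1B2 p a' g₁ b₂ := fun a' g₁ b₂ =>
    Finset.sum_pos (fun _ _ => Finset.sum_pos (fun _ _ => hpos _)
      univ_nonempty) univ_nonempty
  have hpAG1G2B2 : ∀ a' g₁ g₂ b₂, 0 < pAG1G2B2 p a' g₁ g₂ b₂ := fun a' g₁ g₂ b₂ =>
    Finset.sum_pos (fun _ _ => hpos _) univ_nonempty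
  -- key consequence of conditional independence
  have key : ∀ (a' : A) (g₁ : G₁) (g₂ : G₂) (b₂ : B₂),
      pAG1G2B2 p a' g₁ g₂ b₂ * pB2 p b₂ = pG2B2 p g₂ b₂ * pAG1B2 p a' g₁ b₂ := by
    intro a' g₁ g₂ b₂
    have h := hCI g₂ a' g₁ b₂
    have hb := (hpB2 b₂).ne'
    field_simp at h
    show (∑ y : Y, p (y, a', g₁, g₂, b₂)) * pB2 p b₂ = _
    simp only [Finset.univ_eq_attach]
    exact mul_right_cancel₀ hb (by simp only [Finset.univ_eq_attach] at h ⊢; linear_combination pB2 p b₂ * h)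
  -- coefficient identity
  have c_eq : ∀ (g₁ : G₁) (g₂ : G₂) (b₂ : B₂),
      pG1 p g₁ * pG2B2 p g₂ b₂ / pAG1G2B2 p a g₁ g₂ b₂ =
        pG1 p g₁ * pB2 p b₂ / pAG1B2 p a g₁ b₂ := by
    intro g₁ g₂ b₂
    rw [div_eq_div_iff (hpAG1G2B2 a g₁ g₂ b₂).ne' (hpAG1B2 a g₁ b₂).ne']
    linear_combination -(pG1 p g₁) * (key a g₁ g₂ b₂)
  -- summing out g₂ from the regression m₂ recovers m₁
  have sum_m2 : ∀ (g₁' : G₁) (b₂' : B₂),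
      ∑ g₂' : G₂, pG2B2 p g₂' b₂' * m2 p a g₁' g₂' b₂' =
        pB2 p b₂' * m1 p a g₁' b₂' := by
    intro g₁' b₂'
    have h1 : ∀ g₂' : G₂, pG2B2 p g₂' b₂' * m2 p a g₁' g₂' b₂' =
        ∑ y : Y, (y : ℝ) * (pB2 p b₂' * p (y, a, g₁', g₂', b₂') / pAG1B2 p a g₁' b₂') := by
      intro g₂'
      rw [m2, Finset.mul_sum]
      refine Finset.sum_congr rfl fun y _ => ?_
      have hk := key a g₁' g₂' b₂'
      have hA := (hpAG1G2B2 a g₁' g₂' b₂').ne'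
      have hB := (hpAG1B2 a g₁' b₂').ne'
      field_simp
      linear_combination -((y : ℝ) * p (y, a, g₁', g₂', b₂')) * hk
    calc ∑ g₂' : G₂, pG2B2 p g₂' b₂' * m2 p a g₁' g₂' b₂'
        = ∑ g₂' : G₂, ∑ y : Y, (y : ℝ) *
            (pB2 p b₂' * p (y, a, g₁', g₂', b₂') / pAG1B2 p a g₁' b₂') :=
          Finset.sum_congr rfl fun g₂' _ => h1 g₂'
      _ = ∑ y : Y, ∑ g₂' : G₂, (y : ℝ) *
            (pB2 p b₂' * p (y, a, g₁', g₂', b₂') / pAG1B2 p a g₁' b₂') :=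
          Finset.sum_comm
      _ = pB2 p b₂' * m1 p a g₁' b₂' := by
          rw [m1, Finset.mul_sum]
          refine Finset.sum_congr rfl fun y _ => ?_
          rw [Finset.sum_div, Finset.mul_sum, Finset.mul_sum]
          exact Finset.sum_congr rfl fun g₂' _ => by ring
  -- equality of the two target parameters
  have hT : T2 p a = T1 p a := by
    rw [T1, T2]
    refine Finset.sum_congr rfl fun g₁' _ => ?_
    congr 1
    rw [Finset.sum_comm]
    exact Finset.sum_congr rfl fun b₂' _ => sum_m2 g₁' b₂'
  intro y a' g₁ g₂ b₂
  have hmid : (∑ g₂' : G₂, ∑ b₂' : B₂, pG2B2 p g₂' b₂' * m2 p a g₁ g₂' b₂') =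
      ∑ b₂' : B₂, pB2 p b₂' * m1 p a g₁ b₂' := by
    rw [Finset.sum_comm]
    exact Finset.sum_congr rfl fun b₂' _ => sum_m2 g₁ b₂'
  rw [psi1, psi2, hmid, hT, c_eq g₁ g₂ b₂]
  simp only [mul_sub, Finset.sum_sub_distrib]
  ring

end
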